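/- Let N ∈ ℕ, b, c_1,…,c_N ∈ ℝ, and 0 < τ_1 < ⋯ < τ_N. Define R : ℝ → ℝ by R(t) = 0 for t < 0 and, for t ≥ 0, R(t) = Σ_{n=0}^{⌊t/τ_1⌋} Σ_{|α|=n} (c^α/α!) (t − ⟨α,τ⟩)^n e^{b(t − ⟨α,τ⟩)} H(t − ⟨α,τ⟩), where the inner sum is over multi-indices α ∈ ℕ^N with |α| = Σ α_i = n, c^α = ∏ c_i^{α_i}, α! = ∏ α_i!, ⟨α,τ⟩ = Σ α_i τ_i, and H is the Heaviside function (H(s)=1 if s ≥ 0, else 0). Then R(0) = 1 and for every t > 0 (at which R is differentiable), R′(t) = b R(t) + Σ_{j=1}^N c_j R(t − τ_j). -/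

import Mathlib

open Finset

/-- Heaviside function `H = 𝟙_{[0,∞)}`. -/
noncomputable def heaviside (s : ℝ) : ℝ := if 0 ≤ s then 1 else 0

/-- The fundamental solution `R` of the linear delay differential equation,
given by the explicit multi-index series of the paper. -/
noncomputable def Rfun (N : ℕ) (b : ℝ) (c τ : Fin N → ℝ) (τ₁ : ℝ) (t : ℝ) : ℝ :=
  if t < 0 then 0
  else
    ∑ n ∈ Finset.range (Nat.floor (t / τ₁) + 1),
      ∑ α ∈ Finset.Nat.antidiagonalTuple N n,
        ((∏ i, c i ^ α i) / (∏ i, (Nat.factorial (α i) : ℝ))) *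
          (t - ∑ i, (α i : ℝ) * τ i) ^ n *
          Real.exp (b * (t - ∑ i, (α i : ℝ) * τ i)) *
          heaviside (t - ∑ i, (α i : ℝ) * τ i)

namespace DDEaux

variable {N : ℕ} (b : ℝ) (c τ : Fin N → ℝ)

noncomputable def aT (τ : Fin N → ℝ) (α : Fin N → ℕ) : ℝ := ∑ i, (α i : ℝ) * τ i

noncomputable def Kc (c : Fin N → ℝ) (α : Fin N → ℕ) : ℝ :=
  (∏ i, c i ^ α i) / (∏ i, (Nat.factorial (α i) : ℝ))

noncomputable def term (α : Fin N → ℕ) (s : ℝ) : ℝ :=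
  Kc c α * (s - aT τ α) ^ (∑ i, α i) * Real.exp (b * (s - aT τ α)) *
    heaviside (s - aT τ α)

noncomputable def Dterm (α : Fin N → ℕ) (s : ℝ) : ℝ :=
  Kc c α * (((∑ i, α i : ℕ) : ℝ) * (s - aT τ α) ^ (∑ i, α i - 1)
      + b * (s - aT τ α) ^ (∑ i, α i)) * Real.exp (b * (s - aT τ α)) *
    heaviside (s - aT τ α)

noncomputable def Sfun (M : ℕ) (s : ℝ) : ℝ :=
  ∑ n ∈ Finset.range M, ∑ α ∈ Finset.Nat.antidiagonalTuple N n, term b c τ α s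

variable {τ₁ : ℝ}

lemma aT_nonneg (hτ1 : 0 < τ₁) (hτle : ∀ i, τ₁ ≤ τ i) (α : Fin N → ℕ) : 0 ≤ aT τ α := by
  refine Finset.sum_nonneg fun i _ => ?_
  exact mul_nonneg (Nat.cast_nonneg _) (le_trans hτ1.le (hτle i))

lemma le_aT (hτle : ∀ i, τ₁ ≤ τ i) {n : ℕ} {α : Fin N → ℕ} (hα : ∑ i, α i = n) :
    (n : ℝ) * τ₁ ≤ aT τ α := by
  subst hα
  rw [Nat.cast_sum, Finset.sum_mul]
  exact Finset.sum_le_sum fun i _ => by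
    exact mul_le_mul_of_nonneg_left (hτle i) (Nat.cast_nonneg _)

lemma Rfun_eq_Sfun (hτ1 : 0 < τ₁) (hτle : ∀ i, τ₁ ≤ τ i) (s : ℝ) (M : ℕ)
    (hM : Nat.floor (s / τ₁) + 1 ≤ M) :
    Rfun N b c τ τ₁ s = Sfun b c τ M s := by
  by_cases hs : s < 0
  · rw [Rfun, if_pos hs, Sfun]
    refine (Finset.sum_eq_zero fun n _ => Finset.sum_eq_zero fun α hα => ?_).symm
    have h0 : s - aT τ α < 0 := by
      have := aT_nonneg (τ := τ) hτ1 hτle α; linarith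
    rw [term, heaviside, if_neg (not_le.mpr h0), mul_zero]
  · rw [Rfun, if_neg hs, Sfun]
    have step1 : ∑ n ∈ Finset.range (Nat.floor (s / τ₁) + 1),
        ∑ α ∈ Finset.Nat.antidiagonalTuple N n,
        ((∏ i, c i ^ α i) / (∏ i, (Nat.factorial (α i) : ℝ))) *
          (s - ∑ i, (α i : ℝ) * τ i) ^ n *
          Real.exp (b * (s - ∑ i, (α i : ℝ) * τ i)) *
          heaviside (s - ∑ i, (α i : ℝ) * τ i)
        = ∑ n ∈ Finset.range (Nat.floor (s / τ₁) + 1),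
          ∑ α ∈ Finset.Nat.antidiagonalTuple N n, term b c τ α s := by
      refine Finset.sum_congr rfl fun n _ => Finset.sum_congr rfl fun α hα => ?_
      rw [Finset.Nat.mem_antidiagonalTuple] at hα
      rw [term, Kc, aT, hα]
    rw [step1]
    refine Finset.sum_subset (Finset.range_subset_range.mpr hM) fun n _ hn => ?_
    rw [Finset.mem_range, not_lt] at hn
    refine Finset.sum_eq_zero fun α hα => ?_
    rw [Finset.Nat.mem_antidiagonalTuple] at hα
    have h1 : s < (n : ℝ) * τ₁ := by
      have h2 : s / τ₁ < (n : ℝ) := by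
        calc s / τ₁ < (Nat.floor (s / τ₁) : ℝ) + 1 := Nat.lt_floor_add_one _
        _ ≤ (n : ℝ) := by exact_mod_cast Nat.cast_le.mpr hn
      calc s = s / τ₁ * τ₁ := by field_simp
      _ < (n : ℝ) * τ₁ := by exact mul_lt_mul_of_pos_right h2 hτ1
    have h0 : s - aT τ α < 0 := by
      have := le_aT (τ := τ) hτle hα; linarith
    rw [term, heaviside, if_neg (not_le.mpr h0), mul_zero]

lemma smooth_hasDerivAt (K b a : ℝ) (n : ℕ) (x : ℝ) :
    HasDerivAt (fun s => K * (s - a) ^ n * Real.exp (b * (s - a)))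
      (K * ((n : ℝ) * (x - a) ^ (n - 1) + b * (x - a) ^ n) * Real.exp (b * (x - a))) x := by
  have h1 : HasDerivAt (fun s : ℝ => (s - a) ^ n) ((n : ℝ) * (x - a) ^ (n - 1)) x := by
    simpa using ((hasDerivAt_id x).sub_const a).fun_pow n
  have h2 : HasDerivAt (fun s : ℝ => Real.exp (b * (s - a))) (Real.exp (b * (x - a)) * b) x := by
    simpa using (((hasDerivAt_id x).sub_const a).const_mul b).exp
  have h3 := (h1.fun_mul h2).const_mul K
  have : HasDerivAt (fun s => K * ((s - a) ^ n * Real.exp (b * (s - a))))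
      (K * ((n : ℝ) * (x - a) ^ (n - 1) + b * (x - a) ^ n) * Real.exp (b * (x - a))) x := by
    exact h3.congr_deriv (by ring)
  exact this.congr_of_eventuallyEq (Filter.Eventually.of_forall fun y => by ring)

lemma term_hasDerivWithinAt (α : Fin N → ℕ) (s : ℝ) :
    HasDerivWithinAt (term b c τ α) (Dterm b c τ α s) (Set.Ici s) s := by
  rcases lt_trichotomy s (aT τ α) with hsa | hsa | hsa
  · have hz : HasDerivAt (term b c τ α) 0 s := by
      refine (hasDerivAt_const s (0:ℝ)).congr_of_eventuallyEq ?_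
      filter_upwards [Iio_mem_nhds hsa] with y hy
      have hy' : ¬ (0 ≤ y - aT τ α) := by
        have := Set.mem_Iio.mp hy; push_neg; linarith
      simp [term, heaviside, hy']
    have hD : Dterm b c τ α s = 0 := by
      have hy' : ¬ (0 ≤ s - aT τ α) := by push_neg; linarith
      simp [Dterm, heaviside, hy']
    rw [hD]
    exact hz.hasDerivWithinAt
  · have hsm := (smooth_hasDerivAt (Kc c α) b (aT τ α) (∑ i, α i) s).hasDerivWithinAt
      (s := Set.Ici s)
    have heq : ∀ y ∈ Set.Ici s, term b c τ α y
        = Kc c α * (y - aT τ α) ^ (∑ i, α i) * Real.exp (b * (y - aT τ α)) := by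
      intro y hy
      have h0 : 0 ≤ y - aT τ α := by have := Set.mem_Ici.mp hy; linarith
      simp [term, heaviside, h0]
    have hD : Dterm b c τ α s
        = Kc c α * (((∑ i, α i : ℕ) : ℝ) * (s - aT τ α) ^ (∑ i, α i - 1)
            + b * (s - aT τ α) ^ (∑ i, α i)) * Real.exp (b * (s - aT τ α)) := by
      have h0 : (0:ℝ) ≤ s - aT τ α := by linarith
      simp [Dterm, heaviside, h0]
    rw [hD, hsa]
    rw [hsa] at hsm heq
    exact hsm.congr heq (heq _ (by simp))
  · have hz : HasDerivAt (term b c τ α)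
        (Kc c α * (((∑ i, α i : ℕ) : ℝ) * (s - aT τ α) ^ (∑ i, α i - 1)
          + b * (s - aT τ α) ^ (∑ i, α i)) * Real.exp (b * (s - aT τ α))) s := by
      refine (smooth_hasDerivAt (Kc c α) b (aT τ α) (∑ i, α i) s).congr_of_eventuallyEq ?_
      filter_upwards [Ioi_mem_nhds hsa] with y hy
      have h0 : 0 ≤ y - aT τ α := by have := Set.mem_Ioi.mp hy; linarith
      simp [term, heaviside, h0]
    have hD : Dterm b c τ α s
        = Kc c α * (((∑ i, α i : ℕ) : ℝ) * (s - aT τ α) ^ (∑ i, α i - 1)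
            + b * (s - aT τ α) ^ (∑ i, α i)) * Real.exp (b * (s - aT τ α)) := by
      have h0 : (0:ℝ) ≤ s - aT τ α := by linarith
      simp [Dterm, heaviside, h0]
    rw [hD]
    exact hz.hasDerivWithinAt

def ej (j : Fin N) : Fin N → ℕ := Pi.single j 1

lemma sum_add_single (β : Fin N → ℕ) (j : Fin N) :
    ∑ i, (β + ej j) i = (∑ i, β i) + 1 := by
  simp [ej, Pi.single_apply, Finset.sum_add_distrib]

lemma aT_add_single (β : Fin N → ℕ) (j : Fin N) :
    aT τ (β + ej j) = aT τ β + τ j := by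
  unfold aT
  have h : ∀ i, ((β + ej j) i : ℝ) * τ i = (β i : ℝ) * τ i + (if i = j then τ i else 0) := by
    intro i
    by_cases h : i = j
    · simp [ej, Pi.single_apply, h]
      push_cast
      ring
    · simp [ej, Pi.single_apply, h]
  rw [Finset.sum_congr rfl (fun i _ => h i), Finset.sum_add_distrib]
  simp

lemma Kc_add_single (β : Fin N → ℕ) (j : Fin N) :
    ((β j : ℝ) + 1) * Kc c (β + ej j) = c j * Kc c β := by
  have hP : ∏ i, c i ^ (β + ej j) i = c j * ∏ i, c i ^ β i := by
    rw [← Finset.mul_prod_erase _ _ (Finset.mem_univ j),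
        ← Finset.mul_prod_erase _ (fun i => c i ^ β i) (Finset.mem_univ j)]
    simp only [Pi.add_apply, ej, Pi.single_eq_same, pow_succ]
    rw [Finset.prod_congr rfl fun i hi => by
      rw [Pi.single_eq_of_ne (Finset.mem_erase.mp hi).1, add_zero]]
    ring
  have hQ : ∏ i, (Nat.factorial ((β + ej j) i) : ℝ)
      = ((β j : ℝ) + 1) * ∏ i, (Nat.factorial (β i) : ℝ) := by
    rw [← Finset.mul_prod_erase _ _ (Finset.mem_univ j),
        ← Finset.mul_prod_erase _ (fun i => (Nat.factorial (β i) : ℝ)) (Finset.mem_univ j)]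
    simp only [Pi.add_apply, ej, Pi.single_eq_same, Nat.factorial_succ]
    rw [Finset.prod_congr rfl fun i hi => by
      rw [Pi.single_eq_of_ne (Finset.mem_erase.mp hi).1, add_zero]]
    push_cast
    ring
  have h1 : ((β j : ℝ) + 1) ≠ 0 := by positivity
  have h2 : (∏ i, (Nat.factorial (β i) : ℝ)) ≠ 0 :=
    Finset.prod_ne_zero_iff.mpr fun i _ => by
      exact_mod_cast (Nat.factorial_pos (β i)).ne'
  rw [Kc, Kc, hP, hQ]
  field_simp

lemma value_eq (β : Fin N → ℕ) (j : Fin N) (F : ℝ → ℝ) :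
    ((β + ej j) j : ℝ) * Kc c (β + ej j) * F (aT τ (β + ej j))
      = c j * (Kc c β * F (aT τ β + τ j)) := by
  rw [aT_add_single]
  have hj : (((β + ej j) j : ℕ) : ℝ) = (β j : ℝ) + 1 := by simp [ej]
  rw [hj, Kc_add_single]
  ring

lemma sub_add_cancel_ej {α : Fin N → ℕ} {j : Fin N} (h : α j ≠ 0) :
    (α - ej j) + ej j = α := by
  funext i
  by_cases hij : i = j
  · subst hij
    simp [ej, Nat.sub_add_cancel (Nat.one_le_iff_ne_zero.mpr h)]
  · simp [ej, Pi.single_eq_of_ne hij]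

lemma shift (F : ℝ → ℝ) (j : Fin N) (n : ℕ) :
    ∑ α ∈ Finset.Nat.antidiagonalTuple N (n + 1), (α j : ℝ) * Kc c α * F (aT τ α)
      = c j * ∑ β ∈ Finset.Nat.antidiagonalTuple N n, Kc c β * F (aT τ β + τ j) := by
  classical
  rw [Finset.mul_sum]
  rw [← Finset.sum_filter_of_ne (p := fun α => α j ≠ 0)
    (fun α _ h => by intro h0; exact h (by simp [h0]))]
  refine Finset.sum_bij' (fun α _ => α - ej j) (fun β _ => β + ej j) ?_ ?_ ?_ ?_ ?_
  · intro α ha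
    obtain ⟨h1, h2⟩ := Finset.mem_filter.mp ha
    rw [Finset.Nat.mem_antidiagonalTuple] at h1
    show (α - ej j) ∈ _
    rw [Finset.Nat.mem_antidiagonalTuple]
    have := sum_add_single (α - ej j) j
    rw [sub_add_cancel_ej h2, h1] at this
    omega
  · intro β hb
    have hb' := Finset.Nat.mem_antidiagonalTuple.mp hb
    show (β + ej j) ∈ _
    rw [Finset.mem_filter, Finset.Nat.mem_antidiagonalTuple]
    refine ⟨?_, by simp [ej]⟩
    rw [sum_add_single, hb']
  · intro α ha
    exact sub_add_cancel_ej (Finset.mem_filter.mp ha).2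
  · intro β _
    show (β + ej j) - ej j = β
    funext i
    by_cases h : i = j
    · subst h; simp [ej]
    · simp [ej, Pi.single_eq_of_ne h]
  · intro α ha
    have := value_eq c τ (α - ej j) j F
    rw [sub_add_cancel_ej (Finset.mem_filter.mp ha).2] at this
    exact this

end DDEaux

open DDEaux in
theorem stmt2 (N : ℕ) (hN : 0 < N) (b : ℝ) (c τ : Fin N → ℝ)
    (hτ1 : 0 < τ ⟨0, hN⟩) (hτmono : StrictMono τ) :
    Rfun N b c τ (τ ⟨0, hN⟩) 0 = 1 ∧
      ∀ t > (0 : ℝ), DifferentiableAt ℝ (Rfun N b c τ (τ ⟨0, hN⟩)) t →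
        deriv (Rfun N b c τ (τ ⟨0, hN⟩)) t =
          b * Rfun N b c τ (τ ⟨0, hN⟩) t +
            ∑ j, c j * Rfun N b c τ (τ ⟨0, hN⟩) (t - τ j) := by
  set τ₁ := τ ⟨0, hN⟩ with hτ₁def
  have hτle : ∀ i, τ₁ ≤ τ i := fun i => hτmono.monotone (by simp [Fin.le_def])
  constructor
  · -- R(0) = 1
    rw [Rfun, if_neg (lt_irrefl 0)]
    simp [Finset.Nat.antidiagonalTuple_zero_right, heaviside]
  · intro t ht hdiff
    set M := Nat.floor (t / τ₁) + 2 with hMdef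
    have htpos : 0 ≤ t / τ₁ := div_nonneg ht.le hτ1.le
    -- local equality of Rfun and Sfun M near t
    have hloc : Rfun N b c τ τ₁ =ᶠ[nhds t] Sfun b c τ M := by
      filter_upwards [Iio_mem_nhds (show t < t + τ₁ by linarith)] with s hs
      refine Rfun_eq_Sfun b c τ hτ1 hτle s M ?_
      have h1 : s / τ₁ ≤ t / τ₁ + 1 := by
        have h2 : s / τ₁ ≤ (t + τ₁) / τ₁ := by
          have := Set.mem_Iio.mp hs
          gcongr
        rw [add_div, div_self hτ1.ne'] at h2
        exact h2
      have h3 : Nat.floor (s / τ₁) ≤ Nat.floor (t / τ₁) + 1 := by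
        calc Nat.floor (s / τ₁) ≤ Nat.floor (t / τ₁ + 1) := Nat.floor_le_floor h1
        _ = Nat.floor (t / τ₁) + 1 := by rw [Nat.floor_add_one htpos]
      omega
    have hdS : DifferentiableAt ℝ (Sfun b c τ M) t := hdiff.congr_of_eventuallyEq hloc.symm
    have hS : HasDerivWithinAt (Sfun b c τ M)
        (∑ n ∈ Finset.range M, ∑ α ∈ Finset.Nat.antidiagonalTuple N n, Dterm b c τ α t)
        (Set.Ici t) t := by
      unfold Sfun
      exact HasDerivWithinAt.fun_sum fun n _ => HasDerivWithinAt.fun_sum fun α _ =>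
        term_hasDerivWithinAt b c τ α t
    have hU : UniqueDiffWithinAt ℝ (Set.Ici t) t := uniqueDiffOn_Ici t t Set.self_mem_Ici
    have hderiv : deriv (Rfun N b c τ τ₁) t
        = ∑ n ∈ Finset.range M, ∑ α ∈ Finset.Nat.antidiagonalTuple N n, Dterm b c τ α t := by
      rw [hloc.deriv_eq]
      have h2 := (hdS.hasDerivAt.hasDerivWithinAt (s := Set.Ici t)).derivWithin hU
      have h1 := hS.derivWithin hU
      rw [← h2, h1]
    have hsplit : ∑ n ∈ Finset.range M, ∑ α ∈ Finset.Nat.antidiagonalTuple N n, Dterm b c τ α t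
        = b * Sfun b c τ M t +
          ∑ n ∈ Finset.range M, ∑ α ∈ Finset.Nat.antidiagonalTuple N n,
            ((∑ i, α i : ℕ) : ℝ) * Kc c α *
              ((t - aT τ α) ^ (n - 1) * Real.exp (b * (t - aT τ α)) *
                heaviside (t - aT τ α)) := by
      rw [Sfun, Finset.mul_sum, ← Finset.sum_add_distrib]
      refine Finset.sum_congr rfl fun n _ => ?_
      rw [Finset.mul_sum, ← Finset.sum_add_distrib]
      refine Finset.sum_congr rfl fun α hα => ?_
      have hm := Finset.Nat.mem_antidiagonalTuple.mp hα
      rw [Dterm, term, hm]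
      ring
    have hinner : ∀ k, ∑ α ∈ Finset.Nat.antidiagonalTuple N (k + 1),
        ((∑ i, α i : ℕ) : ℝ) * Kc c α *
          ((t - aT τ α) ^ (k + 1 - 1) * Real.exp (b * (t - aT τ α)) *
            heaviside (t - aT τ α))
        = ∑ j, c j * ∑ β ∈ Finset.Nat.antidiagonalTuple N k,
            Kc c β * ((t - (aT τ β + τ j)) ^ k * Real.exp (b * (t - (aT τ β + τ j))) *
              heaviside (t - (aT τ β + τ j))) := by
      intro k
      simp only [Nat.add_sub_cancel]
      calc ∑ α ∈ Finset.Nat.antidiagonalTuple N (k + 1),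
          ((∑ i, α i : ℕ) : ℝ) * Kc c α *
            ((t - aT τ α) ^ k * Real.exp (b * (t - aT τ α)) * heaviside (t - aT τ α))
          = ∑ α ∈ Finset.Nat.antidiagonalTuple N (k + 1), ∑ j, (α j : ℝ) * Kc c α *
            ((t - aT τ α) ^ k * Real.exp (b * (t - aT τ α)) * heaviside (t - aT τ α)) := by
            refine Finset.sum_congr rfl fun α _ => ?_
            rw [Nat.cast_sum, Finset.sum_mul, Finset.sum_mul]
        _ = ∑ j, ∑ α ∈ Finset.Nat.antidiagonalTuple N (k + 1), (α j : ℝ) * Kc c α *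
            ((t - aT τ α) ^ k * Real.exp (b * (t - aT τ α)) * heaviside (t - aT τ α)) :=
            Finset.sum_comm
        _ = _ := by
            refine Finset.sum_congr rfl fun j _ => ?_
            exact shift c τ
              (fun x => (t - x) ^ k * Real.exp (b * (t - x)) * heaviside (t - x)) j k
    have hstepB : ∑ n ∈ Finset.range M, ∑ α ∈ Finset.Nat.antidiagonalTuple N n,
          ((∑ i, α i : ℕ) : ℝ) * Kc c α *
            ((t - aT τ α) ^ (n - 1) * Real.exp (b * (t - aT τ α)) * heaviside (t - aT τ α))
        = ∑ j, c j * Sfun b c τ (Nat.floor (t / τ₁) + 1) (t - τ j) := by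
      rw [hMdef, Finset.sum_range_succ' _ (Nat.floor (t / τ₁) + 1)]
      have hzero : ∑ α ∈ Finset.Nat.antidiagonalTuple N 0,
          ((∑ i, α i : ℕ) : ℝ) * Kc c α *
            ((t - aT τ α) ^ (0 - 1) * Real.exp (b * (t - aT τ α)) *
              heaviside (t - aT τ α)) = 0 := by
        refine Finset.sum_eq_zero fun α hα => ?_
        have hm := Finset.Nat.mem_antidiagonalTuple.mp hα
        rw [hm]
        simp
      rw [hzero, add_zero]
      calc ∑ k ∈ Finset.range (Nat.floor (t / τ₁) + 1),
          ∑ α ∈ Finset.Nat.antidiagonalTuple N (k + 1),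
            ((∑ i, α i : ℕ) : ℝ) * Kc c α *
              ((t - aT τ α) ^ (k + 1 - 1) * Real.exp (b * (t - aT τ α)) *
                heaviside (t - aT τ α))
          = ∑ k ∈ Finset.range (Nat.floor (t / τ₁) + 1),
              ∑ j, c j * ∑ β ∈ Finset.Nat.antidiagonalTuple N k,
                Kc c β * ((t - (aT τ β + τ j)) ^ k * Real.exp (b * (t - (aT τ β + τ j))) *
                  heaviside (t - (aT τ β + τ j))) :=
            Finset.sum_congr rfl fun k _ => hinner k
        _ = ∑ j, ∑ k ∈ Finset.range (Nat.floor (t / τ₁) + 1),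
              c j * ∑ β ∈ Finset.Nat.antidiagonalTuple N k,
                Kc c β * ((t - (aT τ β + τ j)) ^ k * Real.exp (b * (t - (aT τ β + τ j))) *
                  heaviside (t - (aT τ β + τ j))) := Finset.sum_comm
        _ = ∑ j, c j * Sfun b c τ (Nat.floor (t / τ₁) + 1) (t - τ j) := by
            refine Finset.sum_congr rfl fun j _ => ?_
            rw [← Finset.mul_sum]
            congr 1
            rw [Sfun]
            refine Finset.sum_congr rfl fun k _ => Finset.sum_congr rfl fun β hβ => ?_
            have hm := Finset.Nat.mem_antidiagonalTuple.mp hβ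
            have harg : t - (aT τ β + τ j) = t - τ j - aT τ β := by ring
            rw [term, hm, harg]
            ring
    rw [hderiv, hsplit, hstepB]
    congr 1
    · rw [Rfun_eq_Sfun b c τ hτ1 hτle t M (by omega)]
    · refine Finset.sum_congr rfl fun j _ => ?_
      congr 1
      rw [Rfun_eq_Sfun b c τ hτ1 hτle (t - τ j) (Nat.floor (t / τ₁) + 1) ?_]
      have hd : (t - τ j) / τ₁ ≤ t / τ₁ := by
        have h0 : t - τ j ≤ t := by have := hτle j; linarith
        gcongr
      have := Nat.floor_le_floor hd
      omega
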